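/- Let N_A, N_B ≥ 2, A : Matrix (Fin N_A) (Fin N_A) ℂ and B : Matrix (Fin N_B) (Fin N_B) ℂ. Then the trace norm of the realignment of the Kronecker product factorizes into Hilbert–Schmidt norms: ‖RM(A ⊗ₖ B)‖_tr = ‖A‖_HS · ‖B‖_HS. -/

import Mathlib

open Matrix Kronecker Complex ComplexOrder

noncomputable def traceNorm {m n : Type*} [Fintype m] [Fintype n] [DecidableEq n]
    (M : Matrix m n ℂ) : ℝ :=
  (((Matrix.posSemidef_conjTranspose_mul_self M).1.eigenvectorUnitary : Matrix n n ℂ) *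
    diagonal (fun i => ((Real.sqrt ((Matrix.posSemidef_conjTranspose_mul_self M).1.eigenvalues i) : ℝ) : ℂ)) *
    (star ((Matrix.posSemidef_conjTranspose_mul_self M).1.eigenvectorUnitary : Matrix n n ℂ))).trace.re

def realign {NA NB : ℕ} (ρ : Matrix (Fin NA × Fin NB) (Fin NA × Fin NB) ℂ) :
    Matrix (Fin NA × Fin NA) (Fin NB × Fin NB) ℂ :=
  fun p q => ρ (p.1, q.1) (p.2, q.2)

def IsDensityMatrix {n : Type*} [Fintype n] (ρ : Matrix n n ℂ) : Prop :=
  ρ.PosSemidef ∧ ρ.trace = 1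

noncomputable def hsNorm {m n : Type*} [Fintype m] [Fintype n] (M : Matrix m n ℂ) : ℝ :=
  Real.sqrt (∑ i, ∑ j, ‖M i j‖ ^ 2)

noncomputable def hsInner {m n : Type*} [Fintype m] [Fintype n] (X Y : Matrix m n ℂ) : ℂ :=
  (Xᴴ * Y).trace

noncomputable def marginalA {NA NB : ℕ} (ρ : Matrix (Fin NA × Fin NB) (Fin NA × Fin NB) ℂ) :
    Matrix (Fin NA) (Fin NA) ℂ :=
  fun m n => ∑ μ, ρ (m, μ) (n, μ)

noncomputable def marginalB {NA NB : ℕ} (ρ : Matrix (Fin NA × Fin NB) (Fin NA × Fin NB) ℂ) :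
    Matrix (Fin NB) (Fin NB) ℂ :=
  fun μ ν => ∑ m, ρ (m, μ) (m, ν)

def SeparableState {NA NB : ℕ} (ρ : Matrix (Fin NA × Fin NB) (Fin NA × Fin NB) ℂ) : Prop :=
  ∃ (ι : Type) (s : Finset ι) (p : ι → ℝ)
    (ρA : ι → Matrix (Fin NA) (Fin NA) ℂ) (ρB : ι → Matrix (Fin NB) (Fin NB) ℂ),
    (∀ i ∈ s, 0 < p i) ∧ (∑ i ∈ s, p i = 1) ∧
    (∀ i ∈ s, IsDensityMatrix (ρA i)) ∧ (∀ i ∈ s, IsDensityMatrix (ρB i)) ∧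
    ρ = ∑ i ∈ s, (p i : ℂ) • (ρA i ⊗ₖ ρB i)

noncomputable def l2OpNorm {n : Type*} [Fintype n] [DecidableEq n] (M : Matrix n n ℂ) : ℝ :=
  ‖Matrix.toEuclideanCLM (𝕜 := ℂ) (n := n) M‖
theorem traceNorm_realign_kronecker
    (NA NB : ℕ) (hNA : 2 ≤ NA) (hNB : 2 ≤ NB)
    (A : Matrix (Fin NA) (Fin NA) ℂ) (B : Matrix (Fin NB) (Fin NB) ℂ) :
    traceNorm (realign (A ⊗ₖ B)) = hsNorm A * hsNorm B := by
  classical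
  set a := hsNorm A with ha
  set b := hsNorm B with hb
  have ha0 : 0 ≤ a := Real.sqrt_nonneg _
  have hb0 : 0 ≤ b := Real.sqrt_nonneg _
  set u : Fin NA × Fin NA → ℂ := fun p => A p.1 p.2 with hu
  set v : Fin NB × Fin NB → ℂ := fun q => B q.1 q.2 with hv
  set M := realign (A ⊗ₖ B) with hM
  have hMuv : ∀ p q, M p q = u p * v q := by
    intro p q
    simp [hM, realign, Matrix.kroneckerMap_apply, hu, hv]
  have hnnA : (0:ℝ) ≤ ∑ i, ∑ j, ‖A i j‖ ^ 2 :=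
    Finset.sum_nonneg fun i _ => Finset.sum_nonneg fun j _ => pow_nonneg (norm_nonneg _) 2
  have hnnB : (0:ℝ) ≤ ∑ i, ∑ j, ‖B i j‖ ^ 2 :=
    Finset.sum_nonneg fun i _ => Finset.sum_nonneg fun j _ => pow_nonneg (norm_nonneg _) 2
  have h1A : a ^ 2 = ∑ p, ‖u p‖ ^ 2 := by
    rw [ha, hsNorm, Real.sq_sqrt hnnA]
    exact (Fintype.sum_prod_type (f := fun p => ‖u p‖ ^ 2)).symm
  have h1B : b ^ 2 = ∑ q, ‖v q‖ ^ 2 := by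
    rw [hb, hsNorm, Real.sq_sqrt hnnB]
    exact (Fintype.sum_prod_type (f := fun q => ‖v q‖ ^ 2)).symm
  have hua : (∑ p, (starRingEnd ℂ) (u p) * u p) = ((a ^ 2 : ℝ) : ℂ) := by
    have h1 := h1A
    rw [h1]
    push_cast
    refine Finset.sum_congr rfl fun p _ => ?_
    rw [mul_comm, Complex.mul_conj']
  have hvb : (∑ q, (starRingEnd ℂ) (v q) * v q) = ((b ^ 2 : ℝ) : ℂ) := by
    rw [h1B]
    push_cast
    refine Finset.sum_congr rfl fun q _ => ?_
    rw [mul_comm, Complex.mul_conj']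
  -- candidate square root
  set t : ℝ := Real.sqrt (a / b) with ht
  set w : Fin NB × Fin NB → ℂ := fun q => (t : ℂ) * v q with hw
  set S : Matrix (Fin NB × Fin NB) (Fin NB × Fin NB) ℂ :=
    (Matrix.replicateRow Unit w)ᴴ * Matrix.replicateRow Unit w with hS
  have hSapp : ∀ q q', S q q' = (starRingEnd ℂ) (w q) * w q' := by
    intro q q'
    simp [hS, Matrix.mul_apply, Matrix.replicateRow_apply, Matrix.conjTranspose_apply]
  have hSpsd : S.PosSemidef := Matrix.posSemidef_conjTranspose_mul_self _
  have ht2 : (t : ℝ) ^ 2 = a / b := Real.sq_sqrt (div_nonneg ha0 hb0)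
  have hsq : S ^ 2 = Mᴴ * M := by
    by_cases hbz : b = 0
    · have hv0 : ∀ q, v q = 0 := by
        intro q
        have hsum : ∑ q, ‖v q‖ ^ 2 = 0 := by
          rw [← h1B, hbz]; ring
        have := (Finset.sum_eq_zero_iff_of_nonneg (fun q _ => by positivity)).mp hsum q
          (Finset.mem_univ q)
        simpa using this
      ext q q'
      rw [pow_two, Matrix.mul_apply, Matrix.mul_apply]
      simp [hSapp, hw, hv0, hMuv, Matrix.conjTranspose_apply]
    · ext q q'
      rw [pow_two, Matrix.mul_apply, Matrix.mul_apply]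
      have lhs : ∑ r, S q r * S r q' =
          ((t : ℂ) ^ 2) ^ 2 * ((starRingEnd ℂ) (v q) * v q') * ((b ^ 2 : ℝ) : ℂ) := by
        rw [← hvb, Finset.mul_sum]
        refine Finset.sum_congr rfl fun r _ => ?_
        simp only [hSapp, hw, _root_.map_mul, Complex.conj_ofReal]
        push_cast
        ring
      have rhs : ∑ p, Mᴴ q p * M p q' =
          ((starRingEnd ℂ) (v q) * v q') * ((a ^ 2 : ℝ) : ℂ) := by
        rw [← hua, Finset.mul_sum]
        refine Finset.sum_congr rfl fun p _ => ?_
        simp only [Matrix.conjTranspose_apply, hMuv, star_mul', Complex.star_def]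
        ring
      rw [lhs, rhs]
      have hr : ((t : ℝ) ^ 2) ^ 2 * b ^ 2 = a ^ 2 := by
        rw [ht2, div_pow, div_mul_cancel₀ _ (pow_ne_zero 2 hbz)]
      have : ((t : ℂ) ^ 2) ^ 2 * ((b ^ 2 : ℝ) : ℂ) = ((a ^ 2 : ℝ) : ℂ) := by
        push_cast
        exact_mod_cast hr
      calc ((t : ℂ) ^ 2) ^ 2 * ((starRingEnd ℂ) (v q) * v q') * ((b ^ 2 : ℝ) : ℂ)
          = ((starRingEnd ℂ) (v q) * v q') * (((t : ℂ) ^ 2) ^ 2 * ((b ^ 2 : ℝ) : ℂ)) := by ring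
        _ = _ := by rw [this]
  have hsqrt : (((Matrix.posSemidef_conjTranspose_mul_self M).1.eigenvectorUnitary :
      Matrix _ _ ℂ) * diagonal (fun i => ((Real.sqrt
        ((Matrix.posSemidef_conjTranspose_mul_self M).1.eigenvalues i) : ℝ) : ℂ)) *
      (star ((Matrix.posSemidef_conjTranspose_mul_self M).1.eigenvectorUnitary :
        Matrix _ _ ℂ))) = S := by
    open scoped MatrixOrder in
    calc _ = (Matrix.posSemidef_conjTranspose_mul_self M).1.cfc Real.sqrt := by
            rw [Matrix.IsHermitian.cfc, Unitary.conjStarAlgAut_apply]; rfl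
      _ = cfc Real.sqrt (Mᴴ * M) := ((Matrix.posSemidef_conjTranspose_mul_self M).1.cfc_eq _).symm
      _ = CFC.sqrt (Mᴴ * M) :=
            by rw [CFC.sqrt_eq_real_sqrt _ (Matrix.posSemidef_conjTranspose_mul_self M).nonneg,
              cfcₙ_eq_cfc]
      _ = S := CFC.sqrt_unique (by rw [← pow_two]; exact hsq) hSpsd.nonneg
  rw [traceNorm, hsqrt]
  have htr : S.trace = (((t ^ 2) * b ^ 2 : ℝ) : ℂ) := by
    have hdiag : ∀ q, S.diag q = (((t ^ 2 : ℝ)) : ℂ) * ((starRingEnd ℂ) (v q) * v q) := by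
      intro q
      simp only [Matrix.diag_apply, hSapp, hw, _root_.map_mul, Complex.conj_ofReal]
      push_cast
      ring
    rw [Matrix.trace]
    simp only [hdiag]
    rw [← Finset.mul_sum, hvb]
    push_cast
    ring
  rw [htr, Complex.ofReal_re, ht2]
  by_cases hbz : b = 0
  · simp [hbz]
  · field_simp
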